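/- arXiv:2604.13850 — 2 statements merged into one kernel-verified Lean document; each statement's English description precedes it below -/
import Mathlib

section
/- Let m ≥ 4 and m ≤ n ≤ 5m/4 − 1. Then R(F_n, F_m) ≥ 4n + ⌈m/2⌉, where F_k = K_1 + kK_2 is the fan (a hub joined to k independent edges). -/
open SimpleGraph

/-- `H` is contained in `G` as a subgraph. -/
def Contains {α β : Type*} (G : SimpleGraph α) (H : SimpleGraph β) : Prop :=
  ∃ f : H →g G, Function.Injective f

/-- Every red/blue coloring of `K_N` (red = `C`, blue = `Cᶜ`) has a red `G` or blue `H`. -/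
def RamseyProp {α β : Type*} (N : ℕ) (G : SimpleGraph α) (H : SimpleGraph β) : Prop :=
  ∀ C : SimpleGraph (Fin N), Contains C G ∨ Contains Cᶜ H

/-- The Ramsey number `R(G, H)`. -/
noncomputable def ramseyNumber {α β : Type*} (G : SimpleGraph α) (H : SimpleGraph β) : ℕ :=
  sInf {N | RamseyProp N G H}

/-- The join `G + H`: disjoint union plus all edges in between. -/
def graphJoin {α β : Type*} (G : SimpleGraph α) (H : SimpleGraph β) : SimpleGraph (α ⊕ β) :=
  SimpleGraph.fromRel (fun x y =>
    match x, y with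
    | Sum.inl a, Sum.inl b => G.Adj a b
    | Sum.inr a, Sum.inr b => H.Adj a b
    | _, _ => True)

/-- The wheel `W_n = K_1 + C_{n-1}` on `n` vertices. -/
def wheel (n : ℕ) : SimpleGraph (Fin 1 ⊕ Fin (n - 1)) :=
  graphJoin ⊥ (SimpleGraph.cycleGraph (n - 1))

/-- A perfect matching `k • K_2` on `2k` vertices. -/
def matching (k : ℕ) : SimpleGraph (Fin k × Fin 2) :=
  SimpleGraph.fromRel (fun x y => x.1 = y.1)

/-- The fan `F_k = K_1 + k • K_2`. -/
def fan (k : ℕ) : SimpleGraph (Fin 1 ⊕ Fin k × Fin 2) :=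
  graphJoin ⊥ (matching k)

/-- The kipas `K̂_n = K_1 + P_{n-1}` on `n` vertices. -/
def kipas (n : ℕ) : SimpleGraph (Fin 1 ⊕ Fin (n - 1)) :=
  graphJoin ⊥ (SimpleGraph.pathGraph (n - 1))

/-- The blow-up `G[K_2]`: each vertex replaced by an adjacent pair; vertices in
different pairs adjacent iff the original vertices are adjacent. -/
def blowUp {α : Type*} (G : SimpleGraph α) : SimpleGraph (α × Fin 2) :=
  SimpleGraph.fromRel (fun x y => x.1 = y.1 ∨ G.Adj x.1 y.1)




lemma fan_adj_hub (k : ℕ) (x : Fin k × Fin 2) :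
    (fan k).Adj (Sum.inl 0) (Sum.inr x) := by
  simp [fan, graphJoin, SimpleGraph.fromRel_adj]

lemma fan_adj_pair (k : ℕ) (i : Fin k) :
    (fan k).Adj (Sum.inr (i, 0)) (Sum.inr (i, 1)) := by
  simp [fan, graphJoin, matching, SimpleGraph.fromRel_adj]

lemma clique_ramsey : ∀ (k s t : ℕ), s + t ≤ k → ∀ {V : Type} (C : SimpleGraph V)
    (A : Finset V), (s + t).choose s ≤ A.card →
    (∃ B ⊆ A, B.card = s ∧ ∀ x ∈ B, ∀ y ∈ B, x ≠ y → C.Adj x y) ∨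
    (∃ B ⊆ A, B.card = t ∧ ∀ x ∈ B, ∀ y ∈ B, x ≠ y → ¬ C.Adj x y) := by
  intro k
  induction k with
  | zero =>
    intro s t hst V C A _
    have hs : s = 0 := by omega
    subst hs
    exact Or.inl ⟨∅, by simp, by simp, by simp⟩
  | succ k ih =>
    intro s t hst V C A hA
    classical
    match s, t with
    | 0, t => exact Or.inl ⟨∅, by simp, by simp, by simp⟩
    | s+1, 0 => exact Or.inr ⟨∅, by simp, by simp, by simp⟩
    | s+1, t+1 =>
      have hpos : 0 < A.card := lt_of_lt_of_le (Nat.choose_pos (by omega)) hA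
      obtain ⟨v, hv⟩ := Finset.card_pos.mp hpos
      have hcards : ((A.erase v).filter (fun w => C.Adj v w)).card
          + ((A.erase v).filter (fun w => ¬ C.Adj v w)).card = A.card - 1 := by
        rw [Finset.card_filter_add_card_filter_not, Finset.card_erase_of_mem hv]
      have hpascal : (s+1+(t+1)).choose (s+1) = (s+(t+1)).choose s + ((s+1)+t).choose (s+1) := by
        simpa [show s+1+(t+1) = (s+t+1)+1 by omega, show s+(t+1) = s+t+1 by omega,
               show (s+1)+t = s+t+1 by omega] using Nat.choose_succ_succ (s+t+1) s
      by_cases hr : (s+(t+1)).choose s ≤ ((A.erase v).filter (fun w => C.Adj v w)).card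
      · rcases ih s (t+1) (by omega) C _ hr with ⟨B, hBsub, hBcard, hBadj⟩ | ⟨B, hBsub, hBcard, hBadj⟩
        · have hvB : v ∉ B := fun h =>
            Finset.notMem_erase v A (Finset.mem_of_mem_filter _ (hBsub h))
          refine Or.inl ⟨insert v B, ?_, ?_, ?_⟩
          · intro x hx
            rcases Finset.mem_insert.mp hx with rfl | hx
            · exact hv
            · exact Finset.mem_of_mem_erase (Finset.mem_of_mem_filter _ (hBsub hx))
          · rw [Finset.card_insert_of_notMem hvB, hBcard]
          · intro x hx y hy hne
            rcases Finset.mem_insert.mp hx with hxv | hxB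
            · rcases Finset.mem_insert.mp hy with hyv | hyB
              · exact absurd (hxv.trans hyv.symm) hne
              · subst hxv
                exact (Finset.mem_filter.mp (hBsub hyB)).2
            · rcases Finset.mem_insert.mp hy with hyv | hyB
              · subst hyv
                exact ((Finset.mem_filter.mp (hBsub hxB)).2).symm
              · exact hBadj x hxB y hyB hne
        · exact Or.inr ⟨B, fun x hx =>
            Finset.mem_of_mem_erase (Finset.mem_of_mem_filter _ (hBsub hx)), hBcard, hBadj⟩
      · have hb : ((s+1)+t).choose (s+1) ≤ ((A.erase v).filter (fun w => ¬ C.Adj v w)).card := by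
          omega
        rcases ih (s+1) t (by omega) C _ hb with ⟨B, hBsub, hBcard, hBadj⟩ | ⟨B, hBsub, hBcard, hBadj⟩
        · exact Or.inl ⟨B, fun x hx =>
            Finset.mem_of_mem_erase (Finset.mem_of_mem_filter _ (hBsub hx)), hBcard, hBadj⟩
        · have hvB : v ∉ B := fun h =>
            Finset.notMem_erase v A (Finset.mem_of_mem_filter _ (hBsub h))
          refine Or.inr ⟨insert v B, ?_, ?_, ?_⟩
          · intro x hx
            rcases Finset.mem_insert.mp hx with rfl | hx
            · exact hv
            · exact Finset.mem_of_mem_erase (Finset.mem_of_mem_filter _ (hBsub hx))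
          · rw [Finset.card_insert_of_notMem hvB, hBcard]
          · intro x hx y hy hne
            rcases Finset.mem_insert.mp hx with hxv | hxB
            · rcases Finset.mem_insert.mp hy with hyv | hyB
              · exact absurd (hxv.trans hyv.symm) hne
              · subst hxv
                exact (Finset.mem_filter.mp (hBsub hyB)).2
            · rcases Finset.mem_insert.mp hy with hyv | hyB
              · subst hyv
                exact fun h => (Finset.mem_filter.mp (hBsub hxB)).2 h.symm
              · exact hBadj x hxB y hyB hne

lemma contains_fan_of_clique {V : Type} (C : SimpleGraph V) (k : ℕ) (B : Finset V)
    (hcard : B.card = 2 * k + 1) (hadj : ∀ x ∈ B, ∀ y ∈ B, x ≠ y → C.Adj x y) :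
    Contains C (fan k) := by
  have e2 : (Fin 1 ⊕ Fin k × Fin 2) ≃ Fin (2 * k + 1) :=
    Fintype.equivFinOfCardEq (by simp; omega)
  have e : Fin (2 * k + 1) ≃ {x // x ∈ B} := (Finset.equivFinOfCardEq hcard).symm
  let g : (Fin 1 ⊕ Fin k × Fin 2) → V := fun x => (e (e2 x) : V)
  have hginj : Function.Injective g := fun x y h =>
    e2.injective (e.injective (Subtype.ext h))
  refine ⟨⟨g, ?_⟩, hginj⟩
  intro x y hxy
  exact hadj _ (e (e2 x)).2 _ (e (e2 y)).2 (fun h => hxy.ne (hginj h))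

lemma ramseyProp_big (n m : ℕ) :
    RamseyProp ((2*n+1+(2*m+1)).choose (2*n+1)) (fan n) (fan m) := by
  intro C
  classical
  rcases clique_ramsey (2*n+1+(2*m+1)) (2*n+1) (2*m+1) le_rfl C Finset.univ
      (by simp) with ⟨B, _, hc, ha⟩ | ⟨B, _, hc, ha⟩
  · exact Or.inl (contains_fan_of_clique C n B hc ha)
  · refine Or.inr (contains_fan_of_clique Cᶜ m B hc ?_)
    intro x hx y hy hne
    rw [SimpleGraph.compl_adj]
    exact ⟨hne, ha x hx y hy hne⟩

def Rl (a b : ℕ) : Prop :=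
  a = b ∨ (a = 1 ∧ b = 2) ∨ (a = 2 ∧ b = 1) ∨ (a = 1 ∧ b = 3) ∨ (a = 3 ∧ b = 1) ∨
    (a = 4 ∧ b = 2) ∨ (a = 2 ∧ b = 4) ∨ (a = 4 ∧ b = 3) ∨ (a = 3 ∧ b = 4)

def tf (a b c d x : ℕ) : ℕ :=
  if x < a then 0 else if x < b then 1 else if x < c then 3 else if x < d then 4 else 2

def TT (m n q N : ℕ) (w : Fin N) : ℕ :=
  tf (2*n) (2*n+(m-1)) (2*n+(m-1)+(m-q)) (2*n+(m-1)+(m-q)+(q-1)) w.val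

lemma TT_spec (m n q N : ℕ) (w : Fin N) :
    (TT m n q N w = 0 ∧ w.val < 2*n) ∨
    (TT m n q N w = 1 ∧ 2*n ≤ w.val ∧ w.val < 2*n+(m-1)) ∨
    (TT m n q N w = 3 ∧ 2*n+(m-1) ≤ w.val ∧ w.val < 2*n+(m-1)+(m-q)) ∨
    (TT m n q N w = 4 ∧ 2*n+(m-1)+(m-q) ≤ w.val ∧ w.val < 2*n+(m-1)+(m-q)+(q-1)) ∨
    (TT m n q N w = 2 ∧ 2*n+(m-1)+(m-q)+(q-1) ≤ w.val) := by
  unfold TT tf; split_ifs <;> omega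

def CC (m n q N : ℕ) : SimpleGraph (Fin N) where
  Adj x y := x ≠ y ∧ Rl (TT m n q N x) (TT m n q N y)
  symm := by
    constructor
    rintro x y ⟨hxy, hR⟩
    refine ⟨hxy.symm, ?_⟩
    unfold Rl at hR ⊢
    rcases hR with h|h|h|h|h|h|h|h|h
    · exact Or.inl h.symm
    all_goals tauto
  loopless := by constructor; rintro x ⟨h, _⟩; exact h rfl


lemma TT_range (m n q N : ℕ) (w : Fin N) :
    TT m n q N w = 0 ∨ TT m n q N w = 1 ∨ TT m n q N w = 2 ∨ TT m n q N w = 3 ∨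
      TT m n q N w = 4 := by
  unfold TT tf; split_ifs <;> omega

instance Rl.decidable (a b : ℕ) : Decidable (Rl a b) := by unfold Rl; infer_instance

lemma blue_hub0 {a b c : ℕ}
    (rb : b = 0 ∨ b = 1 ∨ b = 2 ∨ b = 3 ∨ b = 4)
    (rc : c = 0 ∨ c = 1 ∨ c = 2 ∨ c = 3 ∨ c = 4)
    (ha : a = 0) (hab : ¬ Rl a b) (hac : ¬ Rl a c) (hbc : ¬ Rl b c) :
    (b = 3 ∨ b = 4) ∨ (c = 3 ∨ c = 4) := by
  subst ha
  rcases rb with rfl|rfl|rfl|rfl|rfl <;> rcases rc with rfl|rfl|rfl|rfl|rfl <;>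
    revert hab hac hbc <;> decide

lemma blue_hub1 {a b c : ℕ}
    (rb : b = 0 ∨ b = 1 ∨ b = 2 ∨ b = 3 ∨ b = 4)
    (rc : c = 0 ∨ c = 1 ∨ c = 2 ∨ c = 3 ∨ c = 4)
    (ha : a = 1) (hab : ¬ Rl a b) (hac : ¬ Rl a c) (hbc : ¬ Rl b c) :
    b = 4 ∨ c = 4 := by
  subst ha
  rcases rb with rfl|rfl|rfl|rfl|rfl <;> rcases rc with rfl|rfl|rfl|rfl|rfl <;>
    revert hab hac hbc <;> decide

lemma blue_hub2 {a b c : ℕ}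
    (rb : b = 0 ∨ b = 1 ∨ b = 2 ∨ b = 3 ∨ b = 4)
    (rc : c = 0 ∨ c = 1 ∨ c = 2 ∨ c = 3 ∨ c = 4)
    (ha : a = 2) (hab : ¬ Rl a b) (hac : ¬ Rl a c) (hbc : ¬ Rl b c) :
    b = 3 ∨ c = 3 := by
  subst ha
  rcases rb with rfl|rfl|rfl|rfl|rfl <;> rcases rc with rfl|rfl|rfl|rfl|rfl <;>
    revert hab hac hbc <;> decide

lemma blue_hub3 {a b c : ℕ}
    (rb : b = 0 ∨ b = 1 ∨ b = 2 ∨ b = 3 ∨ b = 4)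
    (rc : c = 0 ∨ c = 1 ∨ c = 2 ∨ c = 3 ∨ c = 4)
    (ha : a = 3) (hab : ¬ Rl a b) (hac : ¬ Rl a c) (hbc : ¬ Rl b c) :
    b = 2 ∨ c = 2 := by
  subst ha
  rcases rb with rfl|rfl|rfl|rfl|rfl <;> rcases rc with rfl|rfl|rfl|rfl|rfl <;>
    revert hab hac hbc <;> decide

lemma blue_hub4 {a b c : ℕ}
    (rb : b = 0 ∨ b = 1 ∨ b = 2 ∨ b = 3 ∨ b = 4)
    (rc : c = 0 ∨ c = 1 ∨ c = 2 ∨ c = 3 ∨ c = 4)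
    (ha : a = 4) (hab : ¬ Rl a b) (hac : ¬ Rl a c) (hbc : ¬ Rl b c) :
    b = 1 ∨ c = 1 := by
  subst ha
  rcases rb with rfl|rfl|rfl|rfl|rfl <;> rcases rc with rfl|rfl|rfl|rfl|rfl <;>
    revert hab hac hbc <;> decide

set_option maxHeartbeats 1600000 in
lemma no_good (m n N : ℕ) (hm : 4 ≤ m) (h1 : m ≤ n) (h2 : 4*n+4 ≤ 5*m)
    (hN : N + 1 ≤ 4*n + (m+1)/2) : ¬ RamseyProp N (fan n) (fan m) := by
  classical
  obtain ⟨q, hq⟩ : ∃ q, (m+1)/2 = q := ⟨_, rfl⟩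
  rw [hq] at hN
  intro hR
  set C := CC m n q N with hC
  have hCadj : ∀ x y : Fin N, C.Adj x y ↔ x ≠ y ∧ Rl (TT m n q N x) (TT m n q N y) :=
    fun x y => Iff.rfl
  have ht := TT_spec m n q N
  have hcount : ∀ lo hi : ℕ,
      ((Finset.univ : Finset (Fin N)).filter (fun w => lo ≤ w.val ∧ w.val < hi)).card
        ≤ hi - lo := by
    intro lo hi
    rw [← Nat.card_Ico lo hi]
    apply Finset.card_le_card_of_injOn Fin.val
    · intro w hw
      rw [Finset.mem_coe, Finset.mem_Ico]
      exact (Finset.mem_filter.mp (Finset.mem_coe.mp hw)).2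
    · intro x _ y _ hxy
      exact Fin.ext hxy
  rcases hR C with ⟨f, hf⟩ | ⟨f, hf⟩
  · -- red fan n
    have step : ∀ (v : Fin N) (lo1 hi1 lo2 hi2 : ℕ),
        (∀ w : Fin N, Rl (TT m n q N v) (TT m n q N w) →
          (lo1 ≤ w.val ∧ w.val < hi1) ∨ (lo2 ≤ w.val ∧ w.val < hi2)) →
        (C.neighborFinset v).card + 1 ≤ (hi1 - lo1) + (hi2 - lo2) := by
      intro v lo1 hi1 lo2 hi2 hcov
      have hsub : insert v (C.neighborFinset v) ⊆
          Finset.univ.filter (fun w : Fin N =>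
            (lo1 ≤ w.val ∧ w.val < hi1) ∨ (lo2 ≤ w.val ∧ w.val < hi2)) := by
        intro w hw
        simp only [Finset.mem_filter, Finset.mem_univ, true_and]
        rcases Finset.mem_insert.mp hw with rfl | hw
        · exact hcov w (Or.inl rfl)
        · rw [SimpleGraph.mem_neighborFinset] at hw
          exact hcov w ((hCadj v w).mp hw).2
      have hvni : v ∉ C.neighborFinset v := by
        rw [SimpleGraph.mem_neighborFinset]
        exact C.irrefl
      have hle := Finset.card_le_card hsub
      rw [Finset.card_insert_of_notMem hvni] at hle
      calc (C.neighborFinset v).card + 1 ≤ _ := hle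
        _ ≤ _ := by
            rw [Finset.filter_or]
            exact le_trans (Finset.card_union_le _ _)
              (add_le_add (hcount lo1 hi1) (hcount lo2 hi2))
    have hdeg : ∀ v : Fin N, (C.neighborFinset v).card + 1 ≤ 2*n := by
      intro v
      rcases ht v with ⟨hv, _⟩ | ⟨hv, _⟩ | ⟨hv, _⟩ | ⟨hv, _⟩ | ⟨hv, _⟩
      · have hs := step v 0 (2*n) 0 0 (fun w hw => by
          have hw' : TT m n q N w = 0 := by unfold Rl at hw; omega
          have := ht w; omega)
        omega
      · have hs := step v (2*n) (2*n+(m-1)+(m-q)) (2*n+(m-1)+(m-q)+(q-1)) N (fun w hw => by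
          have hw' : TT m n q N w = 1 ∨ TT m n q N w = 2 ∨ TT m n q N w = 3 := by
            unfold Rl at hw; omega
          have := ht w; have := w.isLt; omega)
        omega
      · have hs := step v (2*n) (2*n+(m-1)+(m-q)+(q-1)) 0 0 (fun w hw => by
          have hw' : TT m n q N w = 1 ∨ TT m n q N w = 3 ∨ TT m n q N w = 4 := by
            unfold Rl at hw; omega
          have := ht w; omega)
        omega
      · have hs := step v (2*n+(m-1)) N 0 0 (fun w hw => by
          have hw' : TT m n q N w = 2 ∨ TT m n q N w = 3 ∨ TT m n q N w = 4 := by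
            unfold Rl at hw; omega
          have := ht w; have := w.isLt; omega)
        omega
      · have hs := step v (2*n) (2*n+(m-1)) (2*n+(m-1)+(m-q)) N (fun w hw => by
          have hw' : TT m n q N w = 1 ∨ TT m n q N w = 2 ∨ TT m n q N w = 4 := by
            unfold Rl at hw; omega
          have := ht w; have := w.isLt; omega)
        omega
    have himg := Finset.card_le_card_of_injOn
      (f := fun x : Fin n × Fin 2 => f (Sum.inr x))
      (s := (Finset.univ : Finset (Fin n × Fin 2)))
      (t := C.neighborFinset (f (Sum.inl 0)))
      (fun x _ => by
        rw [Finset.mem_coe, SimpleGraph.mem_neighborFinset]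
        exact f.map_adj (fan_adj_hub n x))
      (fun a _ b _ h => by
        have := hf h
        simpa using this)
    simp only [Finset.card_univ, Fintype.card_prod, Fintype.card_fin] at himg
    have := hdeg (f (Sum.inl 0))
    omega
  · -- blue fan m
    have hblue : ∀ a b : Fin N, Cᶜ.Adj a b → ¬ Rl (TT m n q N a) (TT m n q N b) := by
      intro a b hab hRl
      rw [SimpleGraph.compl_adj] at hab
      exact hab.2 ((hCadj a b).mpr ⟨hab.1, hRl⟩)
    have hv0 := fun (i : Fin m) => hblue _ _ (f.map_adj (fan_adj_hub m (i, 0)))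
    have hv1 := fun (i : Fin m) => hblue _ _ (f.map_adj (fan_adj_hub m (i, 1)))
    have hpair := fun (i : Fin m) => hblue _ _ (f.map_adj (fan_adj_pair m i))
    have key : ∀ (P : ℕ → Prop) (lo hi : ℕ),
        (∀ i : Fin m, P (TT m n q N (f (Sum.inr (i, 0)))) ∨
          P (TT m n q N (f (Sum.inr (i, 1))))) →
        (∀ w : Fin N, P (TT m n q N w) → lo ≤ w.val ∧ w.val < hi) →
        m ≤ hi - lo := by
      intro P lo hi hP hloc
      have hg : ∀ i : Fin m, ∃ c : Fin 2, P (TT m n q N (f (Sum.inr (i, c)))) := by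
        intro i
        rcases hP i with h | h
        · exact ⟨0, h⟩
        · exact ⟨1, h⟩
      choose c hc using hg
      have hcard := Finset.card_le_card_of_injOn
        (f := fun i : Fin m => f (Sum.inr (i, c i)))
        (s := (Finset.univ : Finset (Fin m)))
        (t := Finset.univ.filter (fun w : Fin N => lo ≤ w.val ∧ w.val < hi))
        (fun i _ => by
          simp only [Finset.mem_coe, Finset.mem_filter, Finset.mem_univ, true_and]
          exact hloc _ (hc i))
        (fun a _ b _ h => by
          have := hf h
          simp only [Sum.inr.injEq, Prod.mk.injEq] at this
          exact this.1)
      have := hcount lo hi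
      simp only [Finset.card_univ, Fintype.card_fin] at hcard
      omega
    rcases ht (f (Sum.inl 0)) with ⟨hv, _⟩ | ⟨hv, _⟩ | ⟨hv, _⟩ | ⟨hv, _⟩ | ⟨hv, _⟩
    · have hk := key (fun a => a = 3 ∨ a = 4) (2*n+(m-1)) (2*n+(m-1)+(m-q)+(q-1))
        (fun i => blue_hub0 (TT_range m n q N _) (TT_range m n q N _) hv
          (hv0 i) (hv1 i) (hpair i))
        (fun w hw => by have := ht w; try dsimp only at hw
                        omega)
      omega
    · have hk := key (fun a => a = 4) (2*n+(m-1)+(m-q)) (2*n+(m-1)+(m-q)+(q-1))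
        (fun i => blue_hub1 (TT_range m n q N _) (TT_range m n q N _) hv
          (hv0 i) (hv1 i) (hpair i))
        (fun w hw => by have := ht w; try dsimp only at hw
                        omega)
      omega
    · have hk := key (fun a => a = 2) (2*n+(m-1)+(m-q)+(q-1)) N
        (fun i => blue_hub3 (TT_range m n q N _) (TT_range m n q N _) hv
          (hv0 i) (hv1 i) (hpair i))
        (fun w hw => by have := ht w; have := w.isLt; try dsimp only at hw
                        omega)
      omega
    · have hk := key (fun a => a = 1) (2*n) (2*n+(m-1))
        (fun i => blue_hub4 (TT_range m n q N _) (TT_range m n q N _) hv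
          (hv0 i) (hv1 i) (hpair i))
        (fun w hw => by have := ht w; try dsimp only at hw
                        omega)
      omega
    · have hk := key (fun a => a = 3) (2*n+(m-1)) (2*n+(m-1)+(m-q))
        (fun i => blue_hub2 (TT_range m n q N _) (TT_range m n q N _) hv
          (hv0 i) (hv1 i) (hpair i))
        (fun w hw => by have := ht w; try dsimp only at hw
                        omega)
      omega


theorem stmt_14 (m n : ℕ) (hm : 4 ≤ m) (h1 : m ≤ n) (h2 : 4 * n + 4 ≤ 5 * m) :
    4 * n + (m + 1) / 2 ≤ ramseyNumber (fan n) (fan m) := by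
  have hne : {N | RamseyProp N (fan n) (fan m)}.Nonempty := ⟨_, ramseyProp_big n m⟩
  refine le_csInf hne ?_
  intro N hN
  by_contra hlt
  exact no_good m n N hm h1 h2 (by omega) hN
end

section
/- Let H be a graph with δ(H) ≥ ⌈(n−1)/2⌉ in which every connected component has at most n−2 vertices, and suppose |H| ≥ 2n−3. Then H has at least three connected components, each of size at least ⌈(n+1)/2⌉, and consequently the complement of H contains the kipas K̂_n = K_1 + P_{n−1} as a subgraph (obtained by taking 1, ⌊(n−1)/2⌋, and ⌈(n−1)/2⌉ vertices from three distinct components). -/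
open SimpleGraph

lemma aux_compl_adj {V : Type*} {H : SimpleGraph V} {u v : V}
    (h : H.connectedComponentMk u ≠ H.connectedComponentMk v) : Hᶜ.Adj u v := by
  rw [SimpleGraph.compl_adj]
  refine ⟨fun huv => h (by rw [huv]), fun hadj => h (SimpleGraph.ConnectedComponent.sound hadj.reachable)⟩

theorem stmt_19 {V : Type*} (H : SimpleGraph V) (n : ℕ) (hn : 5 ≤ n)
    (hdeg : ∀ v : V, (n - 1 + 1) / 2 ≤ Nat.card ↥(H.neighborSet v))
    (hcomp : ∀ v : V, Nat.card ↥((H.connectedComponentMk v).supp) ≤ n - 2)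
    (hcard : 2 * n - 3 ≤ Nat.card V) :
    3 ≤ Nat.card H.ConnectedComponent ∧
    (∀ v : V, (n + 1 + 1) / 2 ≤ Nat.card ↥((H.connectedComponentMk v).supp)) ∧
    Contains Hᶜ (kipas n) := by
  classical
  haveI : DecidableEq H.ConnectedComponent := Classical.decEq _
  have hfin : Finite V := Nat.finite_of_card_ne_zero (by omega)
  haveI : Fintype V := Fintype.ofFinite V
  haveI : Fintype H.ConnectedComponent := Fintype.ofFinite _
  -- Part 2
  have h2 : ∀ v : V, (n + 1 + 1) / 2 ≤ Nat.card ↥((H.connectedComponentMk v).supp) := by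
    intro v
    have hsub : insert v (H.neighborSet v) ⊆ (H.connectedComponentMk v).supp := by
      intro u hu
      rcases hu with rfl | hu
      · exact rfl
      · exact SimpleGraph.ConnectedComponent.sound (SimpleGraph.Adj.reachable (H.adj_symm hu))
    have h1 : (insert v (H.neighborSet v)).ncard ≤ ((H.connectedComponentMk v).supp).ncard :=
      Set.ncard_le_ncard hsub (Set.toFinite _)
    have h2' : (insert v (H.neighborSet v)).ncard = (H.neighborSet v).ncard + 1 :=
      Set.ncard_insert_of_notMem (fun h => H.loopless.irrefl v h) (Set.toFinite _)
    have hd := hdeg v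
    rw [Nat.card_coe_set_eq] at hd ⊢
    omega
  -- Part 1
  have hcc : 3 ≤ Nat.card H.ConnectedComponent := by
    have key : (Finset.univ : Finset V).card ≤
        (n - 2) * ((Finset.univ : Finset V).image H.connectedComponentMk).card := by
      apply Finset.card_le_mul_card_image
      intro c _
      obtain ⟨v, hv⟩ := c.exists_rep
      have h1 : (Finset.univ.filter fun x => H.connectedComponentMk x = c).card
          = Nat.card ↥(c.supp) := by
        rw [Nat.card_coe_set_eq, Set.ncard_eq_toFinset_card']
        congr 1
        ext x
        simp [SimpleGraph.ConnectedComponent.mem_supp_iff]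
      rw [h1, ← hv]
      exact hcomp v
    have h2' : ((Finset.univ : Finset V).image H.connectedComponentMk).card ≤
        Nat.card H.ConnectedComponent := by
      rw [Nat.card_eq_fintype_card]
      exact Finset.card_le_card (Finset.subset_univ _)
    rw [Nat.card_eq_fintype_card, ← Finset.card_univ] at hcard
    by_contra hlt
    push_neg at hlt
    have h3 : (n - 2) * ((Finset.univ : Finset V).image H.connectedComponentMk).card
        ≤ (n - 2) * 2 := Nat.mul_le_mul_left _ (by omega)
    omega
  refine ⟨hcc, h2, ?_⟩
  -- Part 3
  obtain ⟨e⟩ : Nonempty (Fin 3 ↪ H.ConnectedComponent) := by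
    apply Function.Embedding.nonempty_of_card_le
    rwa [Fintype.card_fin, ← Nat.card_eq_fintype_card]
  obtain ⟨v0, hv0'⟩ := (e 0).exists_rep
  have hv0 : H.connectedComponentMk v0 = e 0 := hv0' 
  have hsz : ∀ k : ℕ, k ≤ (n + 2) / 2 → ∀ c : H.ConnectedComponent,
      Nonempty (Fin k ↪ ↥c.supp) := by
    intro k hk c
    obtain ⟨v, hv⟩ := c.exists_rep
    have hv' : H.connectedComponentMk v = c := hv
    apply Function.Embedding.nonempty_of_card_le
    have := h2 v
    rw [Nat.card_eq_fintype_card, hv'] at this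
    rw [Fintype.card_fin]
    omega
  obtain ⟨g1⟩ := hsz ((n - 1) / 2) (by omega) (e 1)
  obtain ⟨g2⟩ := hsz (n / 2) (by omega) (e 2)
  have hg1 : ∀ j, H.connectedComponentMk ((g1 j : V)) = e 1 := fun j => (g1 j).2
  have hg2 : ∀ j, H.connectedComponentMk ((g2 j : V)) = e 2 := fun j => (g2 j).2
  set pv : Fin (n - 1) → V := fun i =>
    if h : i.val % 2 = 0 then (g2 ⟨i.val / 2, by have := i.isLt; omega⟩ : V)
    else (g1 ⟨i.val / 2, by have := i.isLt; omega⟩ : V) with hpv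
  have hcomp_pv : ∀ i : Fin (n - 1),
      H.connectedComponentMk (pv i) = if i.val % 2 = 0 then e 2 else e 1 := by
    intro i
    rw [hpv]
    by_cases h : i.val % 2 = 0 <;> simp [h, hg1, hg2]
  have e01 : e 0 ≠ e 1 := fun h => by simpa using e.injective h
  have e02 : e 0 ≠ e 2 := fun h => by simpa using e.injective h
  have e12 : e 1 ≠ e 2 := fun h => by simpa using e.injective h
  have hne_hub : ∀ i : Fin (n - 1), H.connectedComponentMk v0 ≠ H.connectedComponentMk (pv i) := by
    intro i
    rw [hv0, hcomp_pv]
    by_cases h : i.val % 2 = 0 <;> simp [h, e01, e02]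
  have hne_par : ∀ i j : Fin (n - 1), i.val % 2 ≠ j.val % 2 →
      H.connectedComponentMk (pv i) ≠ H.connectedComponentMk (pv j) := by
    intro i j hij
    rw [hcomp_pv, hcomp_pv]
    by_cases h : i.val % 2 = 0 <;> by_cases h' : j.val % 2 = 0 <;>
      simp_all [e12, e12.symm]
  have hpv_inj : Function.Injective pv := by
    intro i j hij
    by_cases hpar : i.val % 2 = j.val % 2
    · by_cases h : i.val % 2 = 0
      · have h' : j.val % 2 = 0 := by omega
        rw [hpv] at hij
        simp only [h, h', dif_pos] at hij
        have := g2.injective (Subtype.ext hij)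
        have := Fin.mk.injEq .. ▸ this
        ext
        omega
      · have h' : ¬ j.val % 2 = 0 := by omega
        rw [hpv] at hij
        simp only [h, h', dif_neg, not_false_iff] at hij
        have := g1.injective (Subtype.ext hij)
        have := Fin.mk.injEq .. ▸ this
        ext
        omega
    · exact absurd (congrArg H.connectedComponentMk hij) (hne_par i j hpar)
  refine ⟨⟨Sum.elim (fun _ => v0) pv, ?_⟩, ?_⟩
  · -- adjacency preservation
    intro x y hxy
    simp only [kipas, graphJoin, SimpleGraph.fromRel_adj] at hxy
    obtain ⟨hne, hrel⟩ := hxy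
    rcases x with a | i <;> rcases y with b | j
    · exact absurd hrel (by simp [SimpleGraph.bot_adj])
    · exact aux_compl_adj (hne_hub j)
    · exact (aux_compl_adj (hne_hub i)).symm
    · have hadj : (SimpleGraph.pathGraph (n - 1)).Adj i j := by
        rcases hrel with h | h
        · exact h
        · exact h.symm
      rw [SimpleGraph.pathGraph_adj] at hadj
      have : i.val % 2 ≠ j.val % 2 := by omega
      exact aux_compl_adj (hne_par i j this)
  · -- injectivity
    intro x y hxy
    rcases x with a | i <;> rcases y with b | j
    · simp [Subsingleton.elim a b]
    · exact absurd (congrArg H.connectedComponentMk hxy) (hne_hub j)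
    · exact absurd (congrArg H.connectedComponentMk hxy).symm (hne_hub i)
    · exact congrArg Sum.inr (hpv_inj hxy)
end
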